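/- Let Ω ⊂ ℝⁿ be a bounded domain, ε > 0, α, β > 0 with α + β = 1, and T the operator of the dynamic programming principle. Define u₀ to equal inf_{Γ_ε} F on Ω and F on Γ_ε, where F : Γ_ε → ℝ is a bounded Borel function, and u_{j+1} = T u_j. Then the sequence (u_j) is pointwise nondecreasing on Ω_ε and uniformly bounded above by sup_{Γ_ε} F. -/

import Mathlib

open MeasureTheory Metric Set Classical

def bdryStrip {n : ℕ} (Ω : Set (EuclideanSpace ℝ (Fin n))) (ε : ℝ) :
    Set (EuclideanSpace ℝ (Fin n)) :=
  {x | x ∉ Ω ∧ Metric.infDist x Ω ≤ ε}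

noncomputable def dppT {n : ℕ} (Ω : Set (EuclideanSpace ℝ (Fin n))) (ε α β : ℝ)
    (u : EuclideanSpace ℝ (Fin n) → ℝ) (x : EuclideanSpace ℝ (Fin n)) : ℝ :=
  if x ∈ Ω then
    α / 2 * sSup (u '' ball x ε) + α / 2 * sInf (u '' ball x ε) +
      β * ⨍ y in ball x ε, u y
  else u x

section helpers

variable {n : ℕ}

local notation "E" => EuclideanSpace ℝ (Fin n)

lemma ball_subset_strip {Ω : Set E} {ε : ℝ} {x : E} (hx : x ∈ Ω) :
    ball x ε ⊆ Ω ∪ bdryStrip Ω ε := by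
  intro y hy
  by_cases h : y ∈ Ω
  · exact Or.inl h
  · exact Or.inr ⟨h, (infDist_le_dist_of_mem hx).trans (mem_ball.mp hy).le⟩

lemma bddAbove_img {u : E → ℝ} {C : ℝ} (hb : ∀ x, |u x| ≤ C) (s : Set E) :
    BddAbove (u '' s) := by
  refine ⟨C, ?_⟩
  rintro a ⟨y, -, rfl⟩
  exact (abs_le.1 (hb y)).2

lemma bddBelow_img {u : E → ℝ} {C : ℝ} (hb : ∀ x, |u x| ≤ C) (s : Set E) :
    BddBelow (u '' s) := by
  refine ⟨-C, ?_⟩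
  rintro a ⟨y, -, rfl⟩
  exact (abs_le.1 (hb y)).1

lemma measurable_ballSup {ε C : ℝ} (hε : 0 < ε) {u : E → ℝ} (hb : ∀ x, |u x| ≤ C) :
    Measurable fun x : E => sSup (u '' ball x ε) := by
  apply measurable_of_Ioi
  intro t
  have hset : (fun x : E => sSup (u '' ball x ε)) ⁻¹' Ioi t
      = ⋃ y ∈ {y : E | t < u y}, ball y ε := by
    ext x
    simp only [mem_preimage, mem_Ioi, mem_iUnion, mem_ball, mem_setOf_eq, exists_prop]
    constructor
    · intro h
      obtain ⟨a, ⟨y, hy, rfl⟩, ha⟩ :=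
        exists_lt_of_lt_csSup ((nonempty_ball.2 hε).image u) h
      exact ⟨y, ha, by rwa [dist_comm, ← mem_ball]⟩
    · rintro ⟨y, hty, hxy⟩
      exact lt_of_lt_of_le hty
        (le_csSup (bddAbove_img hb _) ⟨y, by rwa [mem_ball, dist_comm], rfl⟩)
  rw [hset]
  exact (isOpen_biUnion fun y _ => isOpen_ball).measurableSet

lemma measurable_ballInf {ε C : ℝ} (hε : 0 < ε) {u : E → ℝ} (hb : ∀ x, |u x| ≤ C) :
    Measurable fun x : E => sInf (u '' ball x ε) := by
  apply measurable_of_Iio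
  intro t
  have hset : (fun x : E => sInf (u '' ball x ε)) ⁻¹' Iio t
      = ⋃ y ∈ {y : E | u y < t}, ball y ε := by
    ext x
    simp only [mem_preimage, mem_Iio, mem_iUnion, mem_ball, mem_setOf_eq, exists_prop]
    constructor
    · intro h
      obtain ⟨a, ⟨y, hy, rfl⟩, ha⟩ :=
        exists_lt_of_csInf_lt ((nonempty_ball.2 hε).image u) h
      exact ⟨y, ha, by rwa [dist_comm, ← mem_ball]⟩
    · rintro ⟨y, hty, hxy⟩
      exact lt_of_le_of_lt
        (csInf_le (bddBelow_img hb _) ⟨y, by rwa [mem_ball, dist_comm], rfl⟩) hty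
  rw [hset]
  exact (isOpen_biUnion fun y _ => isOpen_ball).measurableSet

lemma measurable_ballAvg {ε : ℝ} {u : E → ℝ} (hu : Measurable u) :
    Measurable fun x : E => ⨍ y in ball x ε, u y := by
  have hmeas : Measurable fun x : E => ∫ y in ball x ε, u y := by
    have hf : StronglyMeasurable fun p : E × E => if dist p.2 p.1 < ε then u p.2 else 0 := by
      apply Measurable.stronglyMeasurable
      refine Measurable.ite ?_ (hu.comp measurable_snd) measurable_const
      exact (isOpen_lt (continuous_snd.dist continuous_fst) continuous_const).measurableSet
    have h2 := hf.integral_prod_right' (ν := volume)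
    have heq : (fun x : E => ∫ y in ball x ε, u y)
        = fun x : E => ∫ y, (fun p : E × E => if dist p.2 p.1 < ε then u p.2 else 0) (x, y) := by
      funext x
      rw [← integral_indicator measurableSet_ball]
      congr 1
    rw [heq]
    exact h2.measurable
  have heq : (fun x : E => ⨍ y in ball x ε, u y)
      = fun x : E => (volume (ball (0 : E) ε)).toReal⁻¹ * ∫ y in ball x ε, u y := by
    funext x
    rw [setAverage_eq, smul_eq_mul, measureReal_def, Measure.addHaar_ball_center]
  rw [heq]
  exact hmeas.const_mul _

lemma bdd_integrableOn {u : E → ℝ} {C : ℝ} (hu : Measurable u) (hb : ∀ x, |u x| ≤ C)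
    (x : E) (ε : ℝ) : IntegrableOn u (ball x ε) := by
  apply Measure.integrableOn_of_bounded (M := C) measure_ball_lt_top.ne
    hu.aestronglyMeasurable
  exact Filter.Eventually.of_forall fun y => by simpa [Real.norm_eq_abs] using hb y

lemma ballAvg_le {ε b : ℝ} (hε : 0 < ε) {u : E → ℝ} (x : E)
    (hint : IntegrableOn u (ball x ε)) (h : ∀ y ∈ ball x ε, u y ≤ b) :
    ⨍ y in ball x ε, u y ≤ b := by
  have hpos : 0 < (volume (ball x ε)).toReal :=
    ENNReal.toReal_pos (measure_ball_pos volume x hε).ne' measure_ball_lt_top.ne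
  have h1 : ∫ y in ball x ε, u y ≤ (volume (ball x ε)).toReal * b := by
    calc ∫ y in ball x ε, u y ≤ ∫ _ in ball x ε, b :=
          setIntegral_mono_on hint (integrableOn_const measure_ball_lt_top.ne)
            measurableSet_ball h
      _ = (volume (ball x ε)).toReal * b := by rw [setIntegral_const, smul_eq_mul, measureReal_def]
  rw [setAverage_eq, smul_eq_mul]
  calc (volume (ball x ε)).toReal⁻¹ * ∫ y in ball x ε, u y
      ≤ (volume (ball x ε)).toReal⁻¹ * ((volume (ball x ε)).toReal * b) :=
        mul_le_mul_of_nonneg_left h1 (inv_nonneg.2 hpos.le)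
    _ = b := by field_simp

lemma le_ballAvg {ε a : ℝ} (hε : 0 < ε) {u : E → ℝ} (x : E)
    (hint : IntegrableOn u (ball x ε)) (h : ∀ y ∈ ball x ε, a ≤ u y) :
    a ≤ ⨍ y in ball x ε, u y := by
  have hpos : 0 < (volume (ball x ε)).toReal :=
    ENNReal.toReal_pos (measure_ball_pos volume x hε).ne' measure_ball_lt_top.ne
  have h1 : (volume (ball x ε)).toReal * a ≤ ∫ y in ball x ε, u y := by
    calc (volume (ball x ε)).toReal * a = ∫ _ in ball x ε, a := by
          rw [setIntegral_const, smul_eq_mul, measureReal_def]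
      _ ≤ ∫ y in ball x ε, u y :=
          setIntegral_mono_on (integrableOn_const measure_ball_lt_top.ne) hint
            measurableSet_ball h
  rw [setAverage_eq, smul_eq_mul]
  calc a = (volume (ball x ε)).toReal⁻¹ * ((volume (ball x ε)).toReal * a) := by field_simp
    _ ≤ (volume (ball x ε)).toReal⁻¹ * ∫ y in ball x ε, u y :=
        mul_le_mul_of_nonneg_left h1 (inv_nonneg.2 hpos.le)

lemma ballAvg_mono {ε : ℝ} {u v : E → ℝ} (x : E)
    (hu : IntegrableOn u (ball x ε)) (hv : IntegrableOn v (ball x ε))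
    (h : ∀ y ∈ ball x ε, u y ≤ v y) :
    ⨍ y in ball x ε, u y ≤ ⨍ y in ball x ε, v y := by
  rw [setAverage_eq, setAverage_eq, smul_eq_mul, smul_eq_mul]
  exact mul_le_mul_of_nonneg_left (setIntegral_mono_on hu hv measurableSet_ball h)
    (inv_nonneg.2 ENNReal.toReal_nonneg)

end helpers

/-- The iteration `u_{j+1} = T u_j` started from `inf F` is pointwise nondecreasing
on Ω_ε and uniformly bounded above by `sup F`. -/
theorem dpp_iteration_monotone_bounded {n : ℕ} (hn : 0 < n) (Ω : Set (EuclideanSpace ℝ (Fin n)))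
    (hΩo : IsOpen Ω) (hΩc : IsConnected Ω) (hΩb : Bornology.IsBounded Ω)
    (ε α β : ℝ) (hε : 0 < ε) (hα : 0 < α) (hβ : 0 < β) (hαβ : α + β = 1)
    (F : EuclideanSpace ℝ (Fin n) → ℝ) (hF : Measurable F)
    (C : ℝ) (hFb : ∀ x, |F x| ≤ C)
    (useq : ℕ → EuclideanSpace ℝ (Fin n) → ℝ)
    (h0 : useq 0 = fun x =>
      if x ∈ Ω then sInf (F '' bdryStrip Ω ε) else F x)
    (hiter : ∀ j, useq (j + 1) = dppT Ω ε α β (useq j)) :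
    (∀ j, ∀ x ∈ Ω ∪ bdryStrip Ω ε, useq j x ≤ useq (j + 1) x) ∧
    (∀ j, ∀ x ∈ Ω ∪ bdryStrip Ω ε, useq j x ≤ sSup (F '' bdryStrip Ω ε)) := by
  classical
  have hball : ∀ x : EuclideanSpace ℝ (Fin n), (ball x ε).Nonempty :=
    fun x => nonempty_ball.2 hε
  -- the boundary strip is nonempty
  have hne : (bdryStrip Ω ε).Nonempty := by
    have hfr : (frontier Ω).Nonempty := by
      rw [nonempty_frontier_iff]
      refine ⟨hΩc.nonempty, ?_⟩
      intro h
      haveI : Nonempty (Fin n) := ⟨⟨0, hn⟩⟩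
      exact NormedSpace.unbounded_univ ℝ (EuclideanSpace ℝ (Fin n)) (h ▸ hΩb)
    obtain ⟨x, hx⟩ := hfr
    rw [hΩo.frontier_eq] at hx
    refine ⟨x, hx.2, ?_⟩
    rw [infDist_zero_of_mem_closure hx.1]
    exact hε.le
  have himg : (F '' bdryStrip Ω ε).Nonempty := hne.image F
  have hbddA : BddAbove (F '' bdryStrip Ω ε) := bddAbove_img hFb _
  have hbddB : BddBelow (F '' bdryStrip Ω ε) := bddBelow_img hFb _
  set m := sInf (F '' bdryStrip Ω ε) with hm
  set M := sSup (F '' bdryStrip Ω ε) with hM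
  have hmM : m ≤ M := csInf_le_csSup himg hbddB hbddA
  have hmC : -C ≤ m := le_csInf himg (by rintro b ⟨y, -, rfl⟩; exact (abs_le.1 (hFb y)).1)
  have hMC : M ≤ C := csSup_le himg (by rintro b ⟨y, -, rfl⟩; exact (abs_le.1 (hFb y)).2)
  -- the invariant: each iterate is measurable and bounded by C
  have key : ∀ j, Measurable (useq j) ∧ ∀ x, |useq j x| ≤ C := by
    intro j
    induction j with
    | zero =>
      constructor
      · rw [h0]
        exact Measurable.ite hΩo.measurableSet measurable_const hF
      · intro x
        simp only [h0]
        by_cases hx : x ∈ Ω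
        · rw [if_pos hx]
          exact abs_le.2 ⟨hmC, hmM.trans hMC⟩
        · rw [if_neg hx]
          exact hFb x
    | succ j ih =>
      obtain ⟨hmj, hbj⟩ := ih
      constructor
      · rw [hiter j]
        unfold dppT
        refine Measurable.ite hΩo.measurableSet ?_ hmj
        exact ((measurable_const.mul (measurable_ballSup hε hbj)).add
          (measurable_const.mul (measurable_ballInf hε hbj))).add
          (measurable_const.mul (measurable_ballAvg hmj))
      · intro x
        rw [hiter j]
        unfold dppT
        by_cases hx : x ∈ Ω
        · rw [if_pos hx]
          have hSle : sSup (useq j '' ball x ε) ≤ C :=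
            csSup_le ((hball x).image _) (by rintro a ⟨y, -, rfl⟩; exact (abs_le.1 (hbj y)).2)
          have hSge : -C ≤ sSup (useq j '' ball x ε) :=
            le_trans (abs_le.1 (hbj x)).1
              (le_csSup (bddAbove_img hbj _) (mem_image_of_mem _ (mem_ball_self hε)))
          have hIle : sInf (useq j '' ball x ε) ≤ C :=
            le_trans (csInf_le (bddBelow_img hbj _) (mem_image_of_mem _ (mem_ball_self hε)))
              (abs_le.1 (hbj x)).2
          have hIge : -C ≤ sInf (useq j '' ball x ε) :=
            le_csInf ((hball x).image _) (by rintro a ⟨y, -, rfl⟩; exact (abs_le.1 (hbj y)).1)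
          have hint := bdd_integrableOn hmj hbj x ε
          have hAle : (⨍ y in ball x ε, useq j y) ≤ C :=
            ballAvg_le hε x hint (fun y _ => (abs_le.1 (hbj y)).2)
          have hAge : -C ≤ ⨍ y in ball x ε, useq j y :=
            le_ballAvg hε x hint (fun y _ => (abs_le.1 (hbj y)).1)
          have e1 : α / 2 * sSup (useq j '' ball x ε) ≤ α / 2 * C :=
            mul_le_mul_of_nonneg_left hSle (by positivity)
          have e2 : α / 2 * (-C) ≤ α / 2 * sSup (useq j '' ball x ε) :=
            mul_le_mul_of_nonneg_left hSge (by positivity)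
          have e3 : α / 2 * sInf (useq j '' ball x ε) ≤ α / 2 * C :=
            mul_le_mul_of_nonneg_left hIle (by positivity)
          have e4 : α / 2 * (-C) ≤ α / 2 * sInf (useq j '' ball x ε) :=
            mul_le_mul_of_nonneg_left hIge (by positivity)
          have e5 : β * (⨍ y in ball x ε, useq j y) ≤ β * C :=
            mul_le_mul_of_nonneg_left hAle hβ.le
          have e6 : β * (-C) ≤ β * (⨍ y in ball x ε, useq j y) :=
            mul_le_mul_of_nonneg_left hAge hβ.le
          have hsum : α / 2 * C + α / 2 * C + β * C = C := by
            have : α / 2 * C + α / 2 * C + β * C = (α + β) * C := by ring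
            rw [this, hαβ, one_mul]
          have hsum' : α / 2 * (-C) + α / 2 * (-C) + β * (-C) = -C := by
            have : α / 2 * (-C) + α / 2 * (-C) + β * (-C) = (α + β) * (-C) := by ring
            rw [this, hαβ, one_mul]
          rw [abs_le]
          constructor <;> linarith
        · rw [if_neg hx]
          exact hbj x
  -- upper bound
  have hub : ∀ j, ∀ x ∈ Ω ∪ bdryStrip Ω ε, useq j x ≤ M := by
    intro j
    induction j with
    | zero =>
      intro x hx
      simp only [h0]
      by_cases hxo : x ∈ Ω
      · rw [if_pos hxo]; exact hmM
      · rw [if_neg hxo]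
        rcases hx with h | h
        · exact absurd h hxo
        · exact le_csSup hbddA ⟨x, h, rfl⟩
    | succ j ih =>
      intro x hx
      rw [hiter j]
      unfold dppT
      by_cases hxo : x ∈ Ω
      · rw [if_pos hxo]
        have hsub := ball_subset_strip (Ω := Ω) (ε := ε) hxo
        have hyle : ∀ y ∈ ball x ε, useq j y ≤ M := fun y hy => ih y (hsub hy)
        have hS : sSup (useq j '' ball x ε) ≤ M :=
          csSup_le ((hball x).image _) (by rintro a ⟨y, hy, rfl⟩; exact hyle y hy)
        have hI : sInf (useq j '' ball x ε) ≤ M :=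
          le_trans (csInf_le (bddBelow_img (key j).2 _)
            (mem_image_of_mem _ (mem_ball_self hε))) (hyle x (mem_ball_self hε))
        have hA : (⨍ y in ball x ε, useq j y) ≤ M :=
          ballAvg_le hε x (bdd_integrableOn (key j).1 (key j).2 x ε) hyle
        have e1 : α / 2 * sSup (useq j '' ball x ε) ≤ α / 2 * M :=
          mul_le_mul_of_nonneg_left hS (by positivity)
        have e2 : α / 2 * sInf (useq j '' ball x ε) ≤ α / 2 * M :=
          mul_le_mul_of_nonneg_left hI (by positivity)
        have e3 : β * (⨍ y in ball x ε, useq j y) ≤ β * M :=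
          mul_le_mul_of_nonneg_left hA hβ.le
        have hsum : α / 2 * M + α / 2 * M + β * M = M := by
          have : α / 2 * M + α / 2 * M + β * M = (α + β) * M := by ring
          rw [this, hαβ, one_mul]
        linarith
      · rw [if_neg hxo]
        exact ih x hx
  -- monotonicity
  have hmono : ∀ j, ∀ x ∈ Ω ∪ bdryStrip Ω ε, useq j x ≤ useq (j + 1) x := by
    intro j
    induction j with
    | zero =>
      intro x hx
      rw [hiter 0]
      unfold dppT
      by_cases hxo : x ∈ Ω
      · rw [if_pos hxo]
        have hx0 : useq 0 x = m := by simp only [h0, if_pos hxo]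
        have hge : ∀ y ∈ Ω ∪ bdryStrip Ω ε, m ≤ useq 0 y := by
          intro y hy
          simp only [h0]
          by_cases h : y ∈ Ω
          · rw [if_pos h]
          · rw [if_neg h]
            rcases hy with hy | hy
            · exact absurd hy h
            · exact csInf_le hbddB ⟨y, hy, rfl⟩
        have hsub := ball_subset_strip (Ω := Ω) (ε := ε) hxo
        have hgeb : ∀ y ∈ ball x ε, m ≤ useq 0 y := fun y hy => hge y (hsub hy)
        have hS : m ≤ sSup (useq 0 '' ball x ε) :=
          le_trans (hgeb x (mem_ball_self hε))
            (le_csSup (bddAbove_img (key 0).2 _) (mem_image_of_mem _ (mem_ball_self hε)))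
        have hI : m ≤ sInf (useq 0 '' ball x ε) :=
          le_csInf ((hball x).image _) (by rintro a ⟨y, hy, rfl⟩; exact hgeb y hy)
        have hA : m ≤ ⨍ y in ball x ε, useq 0 y :=
          le_ballAvg hε x (bdd_integrableOn (key 0).1 (key 0).2 x ε) hgeb
        have e1 : α / 2 * m ≤ α / 2 * sSup (useq 0 '' ball x ε) :=
          mul_le_mul_of_nonneg_left hS (by positivity)
        have e2 : α / 2 * m ≤ α / 2 * sInf (useq 0 '' ball x ε) :=
          mul_le_mul_of_nonneg_left hI (by positivity)
        have e3 : β * m ≤ β * (⨍ y in ball x ε, useq 0 y) :=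
          mul_le_mul_of_nonneg_left hA hβ.le
        have hsum : α / 2 * m + α / 2 * m + β * m = m := by
          have : α / 2 * m + α / 2 * m + β * m = (α + β) * m := by ring
          rw [this, hαβ, one_mul]
        rw [hx0]
        linarith
      · rw [if_neg hxo]
    | succ j ih =>
      intro x hx
      rw [hiter (j + 1)]
      unfold dppT
      by_cases hxo : x ∈ Ω
      · rw [if_pos hxo]
        conv_lhs => rw [hiter j]
        unfold dppT
        rw [if_pos hxo]
        have hsub := ball_subset_strip (Ω := Ω) (ε := ε) hxo
        have hle : ∀ y ∈ ball x ε, useq j y ≤ useq (j + 1) y := fun y hy => ih y (hsub hy)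
        have hS : sSup (useq j '' ball x ε) ≤ sSup (useq (j + 1) '' ball x ε) :=
          csSup_le ((hball x).image _) (by
            rintro a ⟨y, hy, rfl⟩
            exact (hle y hy).trans (le_csSup (bddAbove_img (key (j + 1)).2 _) ⟨y, hy, rfl⟩))
        have hI : sInf (useq j '' ball x ε) ≤ sInf (useq (j + 1) '' ball x ε) :=
          le_csInf ((hball x).image _) (by
            rintro a ⟨y, hy, rfl⟩
            exact (csInf_le (bddBelow_img (key j).2 _) ⟨y, hy, rfl⟩).trans (hle y hy))
        have hA : (⨍ y in ball x ε, useq j y) ≤ ⨍ y in ball x ε, useq (j + 1) y :=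
          ballAvg_mono x (bdd_integrableOn (key j).1 (key j).2 x ε)
            (bdd_integrableOn (key (j + 1)).1 (key (j + 1)).2 x ε) hle
        have e1 : α / 2 * sSup (useq j '' ball x ε) ≤ α / 2 * sSup (useq (j + 1) '' ball x ε) :=
          mul_le_mul_of_nonneg_left hS (by positivity)
        have e2 : α / 2 * sInf (useq j '' ball x ε) ≤ α / 2 * sInf (useq (j + 1) '' ball x ε) :=
          mul_le_mul_of_nonneg_left hI (by positivity)
        have e3 : β * (⨍ y in ball x ε, useq j y) ≤ β * ⨍ y in ball x ε, useq (j + 1) y :=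
          mul_le_mul_of_nonneg_left hA hβ.le
        linarith
      · rw [if_neg hxo]
  exact ⟨hmono, hub⟩
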